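/- Let p, q be real numbers with 0 < p < q < ∞ and 1 ≤ q. Then there exists a ℂ-linear subspace F of the Banach space ℓ^q such that F is dense in ℓ^q and every nonzero element f of F does not belong to ℓ^p, i.e. ∑_{n} |f(n)|^p = ∞. -/

import Mathlib

open scoped ENNReal

noncomputable section

namespace AuxAG

def vv (p : ℝ) (n : ℕ) : ℂ := (((n : ℝ) + 1) ^ (-(1/p)) : ℝ)

def sig (k m n : ℕ) : ℕ := Nat.pair (Nat.pair k m) n

def ww (p : ℝ) (k m : ℕ) (j : ℕ) : ℂ :=
  if (Nat.unpair j).1 = Nat.pair k m then vv p (Nat.unpair j).2 else 0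

lemma sig_injective (k m : ℕ) : Function.Injective (sig k m) := fun a b h => by
  simpa [sig, Nat.pair_eq_pair] using h

lemma le_sig (k m n : ℕ) : n ≤ sig k m n := Nat.right_le_pair _ _

lemma ww_apply_sig (p : ℝ) (k m n : ℕ) : ww p k m (sig k m n) = vv p n := by
  simp [ww, sig, Nat.unpair_pair]

lemma ww_eq_zero (p : ℝ) {k m j : ℕ} (h : j ∉ Set.range (sig k m)) : ww p k m j = 0 := by
  rw [ww, if_neg]
  intro hc
  exact h ⟨(Nat.unpair j).2, by simp [sig, ← hc, Nat.pair_unpair]⟩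

lemma norm_vv {p : ℝ} (n : ℕ) : ‖vv p n‖ = ((n : ℝ) + 1) ^ (-(1/p)) := by
  rw [vv, Complex.norm_real, Real.norm_eq_abs, abs_of_nonneg]
  positivity

lemma norm_vv_rpow {p : ℝ} (hp : 0 < p) (r : ℝ) (n : ℕ) :
    ‖vv p n‖ ^ r = (((n + 1 : ℕ)) : ℝ) ^ (-(1/p) * r) := by
  rw [norm_vv, ← Real.rpow_mul (by positivity)]
  push_cast
  ring_nf

lemma summable_norm_vv_q {p q : ℝ} (hp : 0 < p) (hpq : p < q) :
    Summable fun n : ℕ => ‖vv p n‖ ^ q := by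
  have he : (-(1/p) * q) < -1 := by
    rw [neg_mul, neg_lt_neg_iff, one_div, inv_mul_eq_div, lt_div_iff₀ hp]
    linarith
  have h := (Real.summable_nat_rpow (p := -(1/p) * q)).2 he
  have h2 := (summable_nat_add_iff (f := fun n : ℕ => ((n : ℝ)) ^ (-(1/p) * q)) 1).2 h
  exact h2.congr fun n => (norm_vv_rpow hp q n).symm

lemma not_summable_smul_vv {p : ℝ} (hp : 0 < p) {c : ℂ} (hc : c ≠ 0) :
    ¬ Summable fun n : ℕ => ‖c * vv p n‖ ^ p := by
  intro hs
  have hkey : ∀ n : ℕ, ‖c * vv p n‖ ^ p = ‖c‖ ^ p * (((n + 1 : ℕ) : ℝ))⁻¹ := by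
    intro n
    rw [norm_mul, Real.mul_rpow (norm_nonneg _) (norm_nonneg _), norm_vv_rpow hp,
      neg_mul, one_div, inv_mul_cancel₀ hp.ne', Real.rpow_neg_one]
  rw [funext hkey] at hs
  have hc' : ‖c‖ ^ p ≠ 0 := by
    have : 0 < ‖c‖ := norm_pos_iff.2 hc
    positivity
  have hs2 : Summable fun n : ℕ => (((n + 1 : ℕ) : ℝ))⁻¹ :=
    (summable_mul_left_iff hc').1 hs
  have hs3 : Summable fun n : ℕ => ((n : ℝ))⁻¹ :=
    (summable_nat_add_iff (f := fun n : ℕ => ((n : ℝ))⁻¹) 1).1 hs2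
  exact Real.not_summable_natCast_inv hs3

end AuxAG

set_option maxHeartbeats 1000000 in
theorem algebraic_genericity_ellQ_ellP (p q : ℝ) (hp : 0 < p) (hpq : p < q)
    (hq : 1 ≤ q) [Fact (1 ≤ ENNReal.ofReal q)] :
    ∃ F : Submodule ℂ (lp (fun _ : ℕ => ℂ) (ENNReal.ofReal q)),
      Dense (F : Set (lp (fun _ : ℕ => ℂ) (ENNReal.ofReal q))) ∧
      ∀ f ∈ F, f ≠ 0 → ¬ Summable fun n : ℕ => ‖(f : ∀ _ : ℕ, ℂ) n‖ ^ p := by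
  classical
  set Q := ENNReal.ofReal q with hQdef
  have hq0 : 0 < q := hp.trans hpq
  have hQtop : Q ≠ ⊤ := ENNReal.ofReal_ne_top
  have hQto : Q.toReal = q := ENNReal.toReal_ofReal hq0.le
  -- membership of the perturbation vectors
  have hvan : ∀ k m : ℕ, ∀ r : ℝ, 0 < r → ∀ j ∉ Set.range (AuxAG.sig k m),
      ‖AuxAG.ww p k m j‖ ^ r = 0 := by
    intro k m r hr j hj
    rw [AuxAG.ww_eq_zero p hj, norm_zero, Real.zero_rpow hr.ne']
  have hsummw : ∀ k m : ℕ, Summable fun j : ℕ => ‖AuxAG.ww p k m j‖ ^ q := by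
    intro k m
    refine ((AuxAG.sig_injective k m).summable_iff (hvan k m q hq0)).1 ?_
    refine (AuxAG.summable_norm_vv_q hp hpq).congr fun n => ?_
    simp [Function.comp, AuxAG.ww_apply_sig]
  have hmemw : ∀ k m : ℕ, Memℓp (AuxAG.ww p k m) Q := by
    intro k m
    apply memℓp_gen
    rw [hQto]
    exact hsummw k m
  set W : ℕ → ℕ → lp (fun _ : ℕ => ℂ) Q := fun k m => ⟨AuxAG.ww p k m, hmemw k m⟩ with hWdef
  -- the generating vectors
  set u : ℕ → ℕ → lp (fun _ : ℕ => ℂ) Q := fun k m =>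
    lp.single Q k (1 : ℂ) + (((m : ℂ) + 1))⁻¹ • W k m with hudef
  set F : Submodule ℂ (lp (fun _ : ℕ => ℂ) Q) :=
    Submodule.span ℂ (Set.range fun km : ℕ × ℕ => u km.1 km.2) with hFdef
  refine ⟨F, ?_, ?_⟩
  · -- density
    set B : ℝ := (∑' n : ℕ, ‖AuxAG.vv p n‖ ^ q) ^ q⁻¹ with hBdef
    have hWnorm : ∀ k m : ℕ, ‖W k m‖ = B := by
      intro k m
      have h1 : ‖W k m‖ ^ q = ∑' j : ℕ, ‖AuxAG.ww p k m j‖ ^ q := by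
        have := lp.norm_rpow_eq_tsum (p := Q) (by rw [hQto]; exact hq0) (W k m)
        rwa [hQto] at this
      have h2 : (∑' j : ℕ, ‖AuxAG.ww p k m j‖ ^ q) = ∑' n : ℕ, ‖AuxAG.vv p n‖ ^ q := by
        rw [← (AuxAG.sig_injective k m).tsum_eq (f := fun j => ‖AuxAG.ww p k m j‖ ^ q)]
        · exact tsum_congr fun n => by rw [AuxAG.ww_apply_sig]
        · intro j hj
          by_contra hjr
          exact hj (hvan k m q hq0 j hjr)
      rw [hBdef, ← h2, ← h1, Real.rpow_rpow_inv (norm_nonneg _) hq0.ne']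
    have hFc : IsClosed (F.topologicalClosure : Set (lp (fun _ : ℕ => ℂ) Q)) :=
      Submodule.isClosed_topologicalClosure F
    have hsingle_mem : ∀ k : ℕ, lp.single Q k (1 : ℂ) ∈ F.topologicalClosure := by
      intro k
      have hdiff : ∀ m : ℕ, ‖u k m - lp.single Q k (1 : ℂ)‖ = (1 / ((m : ℝ) + 1)) * B := by
        intro m
        have : u k m - lp.single Q k (1 : ℂ) = (((m : ℂ) + 1))⁻¹ • W k m := by
          rw [hudef]; exact add_sub_cancel_left _ _
        rw [this, norm_smul, hWnorm, norm_inv, one_div]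
        congr 2
        have : ((m : ℂ) + 1) = ((m + 1 : ℕ) : ℂ) := by push_cast; ring
        rw [this, Complex.norm_natCast]
        push_cast; ring
      have htend0 : Filter.Tendsto (fun m : ℕ => ‖u k m - lp.single Q k (1 : ℂ)‖)
          Filter.atTop (nhds 0) := by
        rw [funext hdiff]
        have := tendsto_one_div_add_atTop_nhds_zero_nat.mul_const B
        rwa [zero_mul] at this
      have htend : Filter.Tendsto (fun m : ℕ => u k m) Filter.atTop
          (nhds (lp.single Q k (1 : ℂ))) := by
        rw [tendsto_iff_norm_sub_tendsto_zero]
        exact htend0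
      refine hFc.mem_of_tendsto htend (Filter.Eventually.of_forall fun m => ?_)
      exact F.le_topologicalClosure (Submodule.subset_span ⟨(k, m), rfl⟩)
    rw [Submodule.dense_iff_topologicalClosure_eq_top, eq_top_iff]
    intro f _
    have hs : HasSum (fun i : ℕ => lp.single Q i ((f : ∀ _ : ℕ, ℂ) i)) f :=
      lp.hasSum_single hQtop f
    refine hFc.mem_of_tendsto hs (Filter.Eventually.of_forall fun s => ?_)
    refine Submodule.sum_mem _ fun i _ => ?_
    have : lp.single Q i ((f : ∀ _ : ℕ, ℂ) i) =
        ((f : ∀ _ : ℕ, ℂ) i) • lp.single (E := fun _ : ℕ => ℂ) Q i (1 : ℂ) := by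
      rw [← lp.single_smul, smul_eq_mul, mul_one]
    rw [this]
    exact Submodule.smul_mem _ _ (hsingle_mem i)
  · intro f hf hf0
    rw [hFdef, Finsupp.mem_span_range_iff_exists_finsupp] at hf
    obtain ⟨c, hc⟩ := hf
    have hcne : c ≠ 0 := by
      rintro rfl
      rw [Finsupp.sum_zero_index] at hc
      exact hf0 hc.symm
    obtain ⟨i0, hi0⟩ : ∃ i, c i ≠ 0 := by
      simpa [Finsupp.ne_iff] using hcne
    set k0 := i0.1
    set m0 := i0.2
    set N := (c.support.sup fun i => i.1) + 1 with hNdef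
    set c' : ℂ := c i0 * (((m0 : ℂ) + 1))⁻¹ with hc'def
    have hc'ne : c' ≠ 0 :=
      mul_ne_zero hi0 (inv_ne_zero (Nat.cast_add_one_ne_zero m0))
    -- coordinate formula along the support of the (k0, m0) perturbation
    have happly : ∀ (i : ℕ × ℕ) (j : ℕ),
        ((c i • u i.1 i.2 : lp (fun _ : ℕ => ℂ) Q) : ∀ _ : ℕ, ℂ) j
          = c i * ((lp.single Q i.1 (1 : ℂ) : ∀ _ : ℕ, ℂ) j + (((i.2 : ℂ) + 1))⁻¹ * AuxAG.ww p i.1 i.2 j) := by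
      intro i j
      rw [hudef]
      simp only [lp.coeFn_smul, Pi.smul_apply, lp.coeFn_add, Pi.add_apply, smul_eq_mul]
      rfl
    have hcoord : ∀ n : ℕ, N ≤ n →
        (f : ∀ _ : ℕ, ℂ) (AuxAG.sig k0 m0 n) = c' * AuxAG.vv p n := by
      intro n hn
      have hjlt : ∀ i ∈ c.support, i.1 < AuxAG.sig k0 m0 n := by
        intro i hi
        have h1 : i.1 < N := Nat.lt_succ_of_le (Finset.le_sup (f := fun i : ℕ × ℕ => i.1) hi)
        exact lt_of_lt_of_le h1 (le_trans hn (AuxAG.le_sig _ _ _))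
      rw [← hc, Finsupp.sum]
      set j := AuxAG.sig k0 m0 n with hjdef
      rw [lp.coeFn_sum, Finset.sum_apply]
      rw [Finset.sum_eq_single i0]
      · rw [happly]
        have hs0 : (lp.single Q k0 (1 : ℂ) : ∀ _ : ℕ, ℂ) j = 0 := by
          by_cases hsupp : i0 ∈ c.support
          · exact lp.single_apply_ne Q k0 _ (hjlt i0 hsupp).ne'
          · exact absurd (Finsupp.mem_support_iff.2 hi0) hsupp
        rw [hs0, AuxAG.ww_apply_sig, zero_add, hc'def]
        ring
      · intro i hi hne
        rw [happly]
        have hs0 : (lp.single Q i.1 (1 : ℂ) : ∀ _ : ℕ, ℂ) j = 0 :=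
          lp.single_apply_ne Q i.1 _ (hjlt i hi).ne'
        have hw0 : AuxAG.ww p i.1 i.2 j = 0 := by
          rw [AuxAG.ww, if_neg]
          rw [hjdef, AuxAG.sig, Nat.unpair_pair]
          intro hcontra
          rw [Nat.pair_eq_pair] at hcontra
          exact hne (Prod.ext hcontra.1.symm hcontra.2.symm)
        rw [hs0, hw0, mul_zero, add_zero, mul_zero]
      · intro hnot
        rw [Finsupp.notMem_support_iff.1 hnot, zero_smul]
        rfl
    intro hsum
    have h1 : Summable ((fun j : ℕ => ‖(f : ∀ _ : ℕ, ℂ) j‖ ^ p) ∘ AuxAG.sig k0 m0) :=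
      hsum.comp_injective (AuxAG.sig_injective _ _)
    have h2 : Summable fun n : ℕ => ‖(f : ∀ _ : ℕ, ℂ) (AuxAG.sig k0 m0 (n + N))‖ ^ p :=
      (summable_nat_add_iff N).2 h1
    have h3 : Summable fun n : ℕ => ‖c' * AuxAG.vv p (n + N)‖ ^ p := by
      refine h2.congr fun n => ?_
      rw [hcoord (n + N) (Nat.le_add_left _ _)]
    exact AuxAG.not_summable_smul_vv hp hc'ne ((summable_nat_add_iff N).1 h3)
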